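/- arXiv:2310.03816 — 3 statements merged into one kernel-verified Lean document; each statement's English description precedes it below -/
import Mathlib

section
/- Let a, x₁, x₃, b be nonzero complex numbers with b²a(a−1) + b x₁x₃(a−1) + a x₁²x₃² = 0, and let r̂ be the 3×3 matrix with rows (a, x₁, b), (x₃(a−1)/b, (x₁x₃+b)/b, x₃), (x₁²x₃²/b³, −x₁(ab+x₁x₃)/(ab²), −x₁x₃/(ab)). Then r̂ − 1₃ has rank 1. -/
open Matrix

noncomputable section

/-- The 3×3 central block of the generic ACC solution. -/
def rhat (a x1 x3 b : ℂ) : Matrix (Fin 3) (Fin 3) ℂ :=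
  !![a, x1, b;
     x3 * (a - 1) / b, (x1 * x3 + b) / b, x3;
     x1 ^ 2 * x3 ^ 2 / b ^ 3, -(x1 * (a * b + x1 * x3)) / (a * b ^ 2), -(x1 * x3) / (a * b)]

/-- `r̂ − 1₃` has rank 1. -/
theorem generic_block_rank_one (a x1 x3 b : ℂ) (ha : a ≠ 0) (hx1 : x1 ≠ 0) (hx3 : x3 ≠ 0)
    (hb : b ≠ 0)
    (hcon : b ^ 2 * a * (a - 1) + b * x1 * x3 * (a - 1) + a * x1 ^ 2 * x3 ^ 2 = 0) :
    (rhat a x1 x3 b - 1).rank = 1 := by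
  have hM : rhat a x1 x3 b - 1 =
      vecMulVec ![1, x3 / b, -(x1 * x3 + a * b) / (a * b ^ 2)] ![a - 1, x1, b] := by
    ext i j
    fin_cases i <;> fin_cases j <;>
      simp [rhat, vecMulVec_apply, Matrix.one_apply, Matrix.sub_apply] <;>
      field_simp
    all_goals first
      | ring1
      | linear_combination b ^ 2 * hcon
      | linear_combination -b ^ 2 * hcon
      | linear_combination (b ^ 2 - x1 * b) * hcon
      | linear_combination x1 * b * hcon
      | linear_combination hcon
  refine le_antisymm ?_ ?_
  · rw [hM, vecMulVec_eq (Fin 1)]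
    have h1 := (rank_mul_le_left
        (Matrix.replicateCol (Fin 1) ![1, x3 / b, -(x1 * x3 + a * b) / (a * b ^ 2)])
        (Matrix.replicateRow (Fin 1) ![a - 1, x1, b])).trans
      (rank_le_card_width _)
    exact h1.trans (by simp)
  · rw [rank_eq_finrank_span_cols, Submodule.one_le_finrank_iff]
    intro hbot
    have hmem : (rhat a x1 x3 b - 1).col 2 ∈
        Submodule.span ℂ (Set.range (rhat a x1 x3 b - 1).col) :=
      Submodule.subset_span ⟨2, rfl⟩
    rw [hbot, Submodule.mem_bot] at hmem
    have h0 := congrFun hmem 0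
    simp [rhat, Matrix.col_apply, Matrix.transpose_apply, Matrix.sub_apply, Matrix.one_apply] at h0
    exact hb h0
end
end

section
/- Under the same hypotheses (a, x₁, x₃, b nonzero, b²a(a−1) + b x₁x₃(a−1) + a x₁²x₃² = 0), the 3×3 matrix r̂ with rows (a, x₁, b), (x₃(a−1)/b, (x₁x₃+b)/b, x₃), (x₁²x₃²/b³, −x₁(ab+x₁x₃)/(ab²), −x₁x₃/(ab)) has eigenvalues 1 (with multiplicity 2) and λ₂ = −(x₁x₃/b)², i.e. its characteristic polynomial is (t−1)²(t−λ₂). -/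
open Matrix Polynomial

noncomputable section

/-- `r̂` has eigenvalues 1 (twice) and `λ₂ = −(x₁x₃/b)²`. -/
theorem generic_block_charpoly (a x1 x3 b : ℂ) (ha : a ≠ 0) (hx1 : x1 ≠ 0) (hx3 : x3 ≠ 0)
    (hb : b ≠ 0)
    (hcon : b ^ 2 * a * (a - 1) + b * x1 * x3 * (a - 1) + a * x1 ^ 2 * x3 ^ 2 = 0) :
    (rhat a x1 x3 b).charpoly = (X - C 1) ^ 2 * (X - C (-(x1 * x3 / b) ^ 2)) := by
  apply Polynomial.funext
  intro t
  have h1 := RingHom.map_det (evalRingHom t) (charmatrix (rhat a x1 x3 b))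
  rw [Matrix.charpoly, show eval t (charmatrix (rhat a x1 x3 b)).det = _ from h1]
  simp only [rhat, charmatrix_apply, RingHom.mapMatrix_apply, Matrix.det_fin_three,
    Matrix.map_apply, Matrix.sub_apply, Matrix.smul_apply, Matrix.one_apply, coe_evalRingHom,
    eval_sub, eval_smul, eval_X, eval_C, smul_eval, Matrix.cons_val', Matrix.cons_val_zero,
    Matrix.cons_val_one, Matrix.head_cons, Matrix.empty_val', Matrix.cons_val_fin_one,
    Matrix.head_fin_const, Matrix.diagonal_apply, eval_one, eval_mul]
  norm_num [Matrix.one_apply, Fin.ext_iff, Matrix.cons_val_two, Matrix.tail_cons]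
  field_simp
  linear_combination (-b * t * (t - 1)) * hcon
end
end

section
/- Under the same hypotheses, the 9×9 matrix R̂ of the generic ACC solution (identity outside the central 3×3 block r̂) satisfies the quadratic (Hecke) relation (R̂ − 1)(R̂ − λ₂·1) = 0, where λ₂ = −(x₁x₃/b)². -/
open Matrix Polynomial

noncomputable section

/-- `R̂ ⊗ 1` acting on `V ⊗ V ⊗ V` with `V = ℂ^3`. -/
def R1 (R : Matrix (Fin 3 × Fin 3) (Fin 3 × Fin 3) ℂ) :
    Matrix (Fin 3 × Fin 3 × Fin 3) (Fin 3 × Fin 3 × Fin 3) ℂ :=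
  fun p q => R (p.1, p.2.1) (q.1, q.2.1) * (if p.2.2 = q.2.2 then 1 else 0)

/-- `1 ⊗ R̂` acting on `V ⊗ V ⊗ V` with `V = ℂ^3`. -/
def R2 (R : Matrix (Fin 3 × Fin 3) (Fin 3 × Fin 3) ℂ) :
    Matrix (Fin 3 × Fin 3 × Fin 3) (Fin 3 × Fin 3 × Fin 3) ℂ :=
  fun p q => (if p.1 = q.1 then 1 else 0) * R (p.2.1, p.2.2) (q.2.1, q.2.2)

/-- The braid relation `R̂₁R̂₂R̂₁ = R̂₂R̂₁R̂₂`. -/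
def Braid (R : Matrix (Fin 3 × Fin 3) (Fin 3 × Fin 3) ℂ) : Prop :=
  R1 R * R2 R * R1 R = R2 R * R1 R * R2 R

/-- position within the charge-2 sector: |20⟩, |11⟩, |02⟩. -/
def f2 (p : Fin 3 × Fin 3) : Fin 3 := if p = (2, 0) then 0 else if p = (1, 1) then 1 else 2

/-- The generic ACC solution: identity outside the central 3×3 block. -/
def Rhat (a x1 x3 b : ℂ) : Matrix (Fin 3 × Fin 3) (Fin 3 × Fin 3) ℂ :=
  fun p q =>
    if (p.1 : ℕ) + (p.2 : ℕ) = 2 ∧ (q.1 : ℕ) + (q.2 : ℕ) = 2 then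
      rhat a x1 x3 b (f2 p) (f2 q)
    else if p = q then 1 else 0

set_option maxHeartbeats 4000000 in
/-- the generic ACC solution satisfies the Hecke relation
`(R̂ − 1)(R̂ − λ₂·1) = 0` with `λ₂ = −(x₁x₃/b)²`. -/
theorem generic_hecke (a x1 x3 b : ℂ) (ha : a ≠ 0) (hx1 : x1 ≠ 0) (hx3 : x3 ≠ 0)
    (hb : b ≠ 0)
    (hcon : b ^ 2 * a * (a - 1) + b * x1 * x3 * (a - 1) + a * x1 ^ 2 * x3 ^ 2 = 0) :
    (Rhat a x1 x3 b - 1) * (Rhat a x1 x3 b - (-(x1 * x3 / b) ^ 2) • 1) = 0 := by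
  ext p q
  fin_cases p <;> fin_cases q <;>
    simp (config := {decide := true}) only [Matrix.mul_apply, Fintype.sum_prod_type,
      Fin.sum_univ_three, Matrix.sub_apply, Matrix.smul_apply, Matrix.one_apply,
      Matrix.zero_apply, Rhat, rhat, f2, smul_eq_mul, Prod.mk.injEq, Fin.isValue, ite_true,
      ite_false, if_true, if_false, Matrix.cons_val', Matrix.cons_val_zero, Matrix.cons_val_one,
      Matrix.head_cons, Matrix.empty_val', Matrix.cons_val_fin_one, Matrix.head_fin_const,
      Matrix.cons_val_two, Matrix.tail_cons, and_true, and_false, true_and, false_and,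
      Fin.reduceEq, Nat.reduceAdd, reduceCtorEq, Fin.val_zero, Fin.val_one, Fin.val_two, mul_one,
      mul_zero, zero_mul, one_mul, sub_zero, zero_sub, add_zero, zero_add, neg_neg, neg_zero,
      mul_neg, neg_mul, sub_self] <;>
    first
    | done
    | norm_num [Matrix.of_apply, Matrix.cons_val_zero, Matrix.cons_val_one, Matrix.head_cons,
        Matrix.cons_val_two, Matrix.tail_cons]
  all_goals field_simp
  all_goals try rw [div_add' _ _ _ (by simp [ha, hb]), _root_.div_eq_zero_iff]
  all_goals try left
  · linear_combination (-x1 * x3) * hcon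
  · linear_combination (-x1 ^ 2 * x3) * hcon
  · linear_combination (x1 ^ 2 * x3 ^ 2 - x1 * x3 * b) * hcon
  · linear_combination (x3) * hcon
  · linear_combination (x1 * x3) * hcon
  · linear_combination (x3) * hcon
  · linear_combination (1) * hcon
  · linear_combination (x1) * hcon
  · linear_combination (1) * hcon
end
end
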